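/- arXiv:1602.01768 — 2 statements merged into one kernel-verified Lean document; each statement's English description precedes it below -/
import Mathlib

section
/- Let A ∈ ℝ^{n×n} be invertible, W ∈ ℝ^{n×n} symmetric positive definite, and let S_1, …, S_r with S_i ∈ ℝ^{n×q_i} each have full column rank, with probabilities p_i > 0, Σ_{i=1}^r p_i = 1. Set Z_i := A^T S_i (S_i^T A W A^T S_i)^{-1} S_i^T A and ρ := 1 − λ_min(W^{1/2} (Σ_{i=1}^r p_i Z_i) W^{1/2}). Then 0 ≤ 1 − (Σ_{i=1}^r p_i q_i)/n ≤ ρ ≤ 1. -/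
open Matrix BigOperators

/-- The square root of a positive semidefinite matrix, as defined in the older Mathlib
(`Matrix.PosSemidef.sqrt`, removed since). -/
noncomputable def Matrix.PosSemidef.sqrt {n 𝕜 : Type*} [Fintype n] [RCLike 𝕜] [PartialOrder 𝕜] [DecidableEq n]
    {A : Matrix n n 𝕜} (hA : A.PosSemidef) : Matrix n n 𝕜 :=
  (hA.1.eigenvectorUnitary : Matrix n n 𝕜) * diagonal (fun i => ((√(hA.1.eigenvalues i) : ℝ) : 𝕜)) *
    (star hA.1.eigenvectorUnitary : Matrix n n 𝕜)

lemma mySqrtHerm {n : ℕ} {W : Matrix (Fin n) (Fin n) ℝ} (hW : W.PosSemidef) :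
    hW.sqrtᴴ = hW.sqrt := by
  unfold Matrix.PosSemidef.sqrt
  simp [conjTranspose_mul, Matrix.mul_assoc, diagonal_conjTranspose, star_eq_conjTranspose]

lemma mySqrtMul {n : ℕ} {W : Matrix (Fin n) (Fin n) ℝ} (hW : W.PosSemidef) :
    hW.sqrt * hW.sqrt = W := by
  unfold Matrix.PosSemidef.sqrt
  have hu : (star hW.1.eigenvectorUnitary : Matrix (Fin n) (Fin n) ℝ) *
      (hW.1.eigenvectorUnitary : Matrix (Fin n) (Fin n) ℝ) = 1 :=
    Unitary.coe_star_mul_self _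
  simp only [Matrix.mul_assoc]
  rw [← Matrix.mul_assoc (star _ : Matrix (Fin n) (Fin n) ℝ), hu, Matrix.one_mul,
    ← Matrix.mul_assoc (diagonal _), diagonal_mul_diagonal]
  conv_rhs => rw [hW.1.spectral_theorem, Unitary.conjStarAlgAut_apply]
  rw [Matrix.mul_assoc]
  congr 3
  ext i
  simp [Real.mul_self_sqrt (hW.eigenvalues_nonneg i)]

lemma myFullRank {n q : ℕ} (S : Matrix (Fin n) (Fin q) ℝ)
    (hS : S.rank = q) (v : Fin q → ℝ) (hv : S *ᵥ v = 0) : v = 0 := by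
  have h := S.mulVecLin.finrank_range_add_finrank_ker
  rw [Module.finrank_fin_fun ℝ] at h
  have hr : S.rank = Module.finrank ℝ (LinearMap.range S.mulVecLin) := rfl
  rw [hr.symm, hS] at h
  have hker : Module.finrank ℝ (LinearMap.ker S.mulVecLin) = 0 := by omega
  have : LinearMap.ker S.mulVecLin = ⊥ := Submodule.finrank_eq_zero.mp hker
  have hvk : v ∈ LinearMap.ker S.mulVecLin := by
    simpa [LinearMap.mem_ker, mulVecLin_apply] using hv
  simpa [this] using hvk

lemma myPosDefG {n q : ℕ} (A W : Matrix (Fin n) (Fin n) ℝ)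
    (S : Matrix (Fin n) (Fin q) ℝ) (hA : IsUnit A.det) (hW : W.PosDef)
    (hS : S.rank = q) : (Sᵀ * A * W * Aᵀ * S).PosDef := by
  have key : Sᵀ * A * W * Aᵀ * S = (Aᵀ * S)ᴴ * W * (Aᵀ * S) := by
    rw [conjTranspose_eq_transpose_of_trivial, transpose_mul, transpose_transpose]
    rw [Matrix.mul_assoc]
  rw [key]
  refine posDef_iff_dotProduct_mulVec.mpr ⟨?_, ?_⟩
  · exact isHermitian_conjTranspose_mul_mul _ hW.isHermitian
  · intro x hx
    have hinj : (Aᵀ * S) *ᵥ x ≠ 0 := by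
      intro h0
      have hAT : IsUnit Aᵀ := (Matrix.isUnit_iff_isUnit_det _).mpr (by simpa using hA)
      have : Aᵀ *ᵥ (S *ᵥ x) = 0 := by rw [mulVec_mulVec]; exact h0
      have hS0 : S *ᵥ x = 0 := by
        have := Matrix.mulVec_injective_iff_isUnit.mpr hAT (a₁ := S *ᵥ x) (a₂ := 0)
        simp only [mulVec_zero] at this
        exact this ‹_›
      exact hx (myFullRank S hS x hS0)
    simpa only [star_mulVec, dotProduct_mulVec, vecMul_vecMul] using hW.dotProduct_mulVec_pos hinj

lemma mySumEig {n : ℕ} {M : Matrix (Fin n) (Fin n) ℝ} (hM : M.IsHermitian) :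
    ∑ i, hM.eigenvalues i = M.trace := by
  nth_rewrite 2 [hM.spectral_theorem]
  rw [Unitary.conjStarAlgAut_apply, Matrix.trace_mul_comm, ← Matrix.mul_assoc,
    (Matrix.mem_unitaryGroup_iff').mp (hM.eigenvectorUnitary).2, Matrix.one_mul,
    Matrix.trace_diagonal]
  simp [Function.comp]

lemma myPSDsmul {n : ℕ} {M : Matrix (Fin n) (Fin n) ℝ} (hM : M.PosSemidef) {c : ℝ}
    (hc : 0 ≤ c) : (c • M).PosSemidef := by
  refine PosSemidef.of_dotProduct_mulVec_nonneg ?_ fun x => ?_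
  · unfold Matrix.IsHermitian
    rw [conjTranspose_smul, hM.1]
    simp
  · rw [smul_mulVec, dotProduct_smul, smul_eq_mul]
    exact mul_nonneg hc (hM.dotProduct_mulVec_nonneg x)

lemma myPSDsum {n r : ℕ} (f : Fin r → Matrix (Fin n) (Fin n) ℝ)
    (hf : ∀ i, (f i).PosSemidef) : (∑ i, f i).PosSemidef :=
  Finset.sum_induction f Matrix.PosSemidef (fun _ _ ha hb => ha.add hb)
    Matrix.PosSemidef.zero (fun i _ => hf i)

/-- `Z = Aᵀ S (Sᵀ A W Aᵀ S)⁻¹ Sᵀ A`. -/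
noncomputable def Zmat {n q : ℕ} (A W : Matrix (Fin n) (Fin n) ℝ)
    (S : Matrix (Fin n) (Fin q) ℝ) : Matrix (Fin n) (Fin n) ℝ :=
  Aᵀ * S * (Sᵀ * A * W * Aᵀ * S)⁻¹ * Sᵀ * A

theorem stmt10 {n r : ℕ} (hn : 0 < n) (A W : Matrix (Fin n) (Fin n) ℝ)
    (q : Fin r → ℕ) (S : ∀ i, Matrix (Fin n) (Fin (q i)) ℝ)
    (hA : IsUnit A.det) (hW : W.PosDef) (hS : ∀ i, (S i).rank = q i)
    (p : Fin r → ℝ) (hp : ∀ i, 0 < p i) (hsum : ∑ i, p i = 1)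
    (hM : (hW.posSemidef.sqrt * (∑ i, p i • Zmat A W (S i)) *
      hW.posSemidef.sqrt).IsHermitian) :
    0 ≤ 1 - (∑ i, p i * (q i : ℝ)) / (n : ℝ) ∧
    1 - (∑ i, p i * (q i : ℝ)) / (n : ℝ) ≤ 1 - ⨅ j, hM.eigenvalues j ∧
    1 - ⨅ j, hM.eigenvalues j ≤ 1 := by
  have _inst : Nonempty (Fin n) := ⟨⟨0, hn⟩⟩
  have hnR : (0:ℝ) < n := Nat.cast_pos.mpr hn
  set s := hW.posSemidef.sqrt with hsdef
  have hsT : sᵀ = s := by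
    rw [← conjTranspose_eq_transpose_of_trivial]
    exact mySqrtHerm hW.posSemidef
  have hss : s * s = W := mySqrtMul hW.posSemidef
  have hG : ∀ i, ((S i)ᵀ * A * W * Aᵀ * (S i)).PosDef :=
    fun i => myPosDefG A W (S i) hA hW (hS i)
  have hP : ∀ i, s * Zmat A W (S i) * s
      = (s * Aᵀ * S i) * ((S i)ᵀ * A * W * Aᵀ * (S i))⁻¹ * (s * Aᵀ * S i)ᵀ := by
    intro i
    unfold Zmat
    rw [transpose_mul, transpose_mul, transpose_transpose, hsT]
    simp only [Matrix.mul_assoc]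
  have hCtC : ∀ i, (s * Aᵀ * S i)ᵀ * (s * Aᵀ * S i) = (S i)ᵀ * A * W * Aᵀ * (S i) := by
    intro i
    rw [transpose_mul, transpose_mul, transpose_transpose, hsT]
    simp only [Matrix.mul_assoc]
    rw [← Matrix.mul_assoc s s, hss]
  have hMsum : s * (∑ i, p i • Zmat A W (S i)) * s
      = ∑ i, p i • (s * Zmat A W (S i) * s) := by
    rw [Matrix.mul_sum, Matrix.sum_mul]
    exact Finset.sum_congr rfl fun i _ => by rw [Matrix.mul_smul, Matrix.smul_mul]
  have hPSD : (s * (∑ i, p i • Zmat A W (S i)) * s).PosSemidef := by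
    rw [hMsum]
    apply myPSDsum
    intro i
    apply myPSDsmul _ (hp i).le
    rw [hP i]
    have := ((hG i).inv).posSemidef.mul_mul_conjTranspose_same (s * Aᵀ * S i)
    rwa [conjTranspose_eq_transpose_of_trivial] at this
  have htr : ∀ i, (s * Zmat A W (S i) * s).trace = (q i : ℝ) := by
    intro i
    rw [hP i, Matrix.trace_mul_cycle, hCtC i,
      Matrix.mul_nonsing_inv _ ((Matrix.isUnit_iff_isUnit_det _).mp (hG i).isUnit),
      Matrix.trace_one]
    simp
  have htrM : (s * (∑ i, p i • Zmat A W (S i)) * s).trace = ∑ i, p i * (q i : ℝ) := by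
    rw [hMsum, Matrix.trace_sum]
    exact Finset.sum_congr rfl fun i _ => by rw [Matrix.trace_smul, htr i, smul_eq_mul]
  have heigsum : ∑ j, hM.eigenvalues j = ∑ i, p i * (q i : ℝ) :=
    (mySumEig hM).trans htrM
  have hnonneg : ∀ j, 0 ≤ hM.eigenvalues j := fun j => hPSD.eigenvalues_nonneg j
  have hinf_nonneg : 0 ≤ ⨅ j, hM.eigenvalues j := le_ciInf hnonneg
  have hbdd : BddBelow (Set.range hM.eigenvalues) :=
    Set.Finite.bddBelow (Set.finite_range _)
  have hsum_ge : (n:ℝ) * (⨅ j, hM.eigenvalues j) ≤ ∑ i, p i * (q i : ℝ) := by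
    rw [← heigsum]
    calc (n:ℝ) * (⨅ j, hM.eigenvalues j) = ∑ _j : Fin n, ⨅ j, hM.eigenvalues j := by
          rw [Finset.sum_const, Finset.card_fin, nsmul_eq_mul]
      _ ≤ ∑ j, hM.eigenvalues j :=
          Finset.sum_le_sum fun j _ => ciInf_le hbdd j
  have hq : ∀ i, (q i : ℝ) ≤ n := by
    intro i
    have := (S i).rank_le_card_height
    rw [hS i, Fintype.card_fin] at this
    exact_mod_cast this
  have hT_le : ∑ i, p i * (q i : ℝ) ≤ n := by
    calc ∑ i, p i * (q i : ℝ) ≤ ∑ i, p i * (n : ℝ) :=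
          Finset.sum_le_sum fun i _ => mul_le_mul_of_nonneg_left (hq i) (hp i).le
      _ = n := by rw [← Finset.sum_mul, hsum, one_mul]
  have hT_nonneg : (0:ℝ) ≤ ∑ i, p i * (q i : ℝ) :=
    Finset.sum_nonneg fun i _ => mul_nonneg (hp i).le (Nat.cast_nonneg _)
  refine ⟨?_, ?_, ?_⟩
  · have : (∑ i, p i * (q i : ℝ)) / n ≤ 1 := by
      rw [div_le_one hnR]; exact hT_le
    linarith
  · have hinfle : (⨅ j, hM.eigenvalues j) ≤ (∑ i, p i * (q i : ℝ)) / n := by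
      rw [le_div_iff₀ hnR, mul_comm]
      exact hsum_ge
    linarith
  · linarith
end

section
/- Let A ∈ ℝ^{n×n} be invertible, W ∈ ℝ^{n×n} symmetric positive definite, and let S_1, …, S_r with S_i ∈ ℝ^{n×q_i} each have full column rank, with probabilities p_i > 0, Σ_{i=1}^r p_i = 1. Fix X_0 ∈ ℝ^{n×n}; for each path s = (s_0, …, s_{k−1}) ∈ {1,…,r}^k define X_k(s) recursively by X_{j+1}(s) = X_j(s) + W A^T S_{s_j} (S_{s_j}^T A W A^T S_{s_j})^{-1} S_{s_j}^T (I − A X_j(s)), starting from X_0(s) = X_0. Then, with Z_i := A^T S_i (S_i^T A W A^T S_i)^{-1} S_i^T A and ρ := 1 − λ_min(W^{1/2}(Σ_{i=1}^r p_i Z_i)W^{1/2}), the expected squared error satisfies Σ_{s ∈ {1,…,r}^k} (Π_{j<k} p_{s_j}) ‖X_k(s) − A^{-1}‖_{F(W^{-1})}² ≤ ρ^k ‖X_0 − A^{-1}‖_{F(W^{-1})}². -/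
open Matrix BigOperators

/-- Squared weighted Frobenius norm: `‖X‖_{F(W⁻¹)}² = Tr(Xᵀ W⁻¹ X W⁻¹)`. -/
noncomputable def wFNormSq {n : ℕ} (W X : Matrix (Fin n) (Fin n) ℝ) : ℝ :=
  (Xᵀ * W⁻¹ * X * W⁻¹).trace

/-- One sketch-and-project step for the inverse equation `A X = I` (row variant). -/
noncomputable def rowStep {n q : ℕ} (A W : Matrix (Fin n) (Fin n) ℝ)
    (S : Matrix (Fin n) (Fin q) ℝ) (X : Matrix (Fin n) (Fin n) ℝ) :
    Matrix (Fin n) (Fin n) ℝ :=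
  X + W * Aᵀ * S * (Sᵀ * A * W * Aᵀ * S)⁻¹ * Sᵀ * (1 - A * X)

/-- The square root of a positive semidefinite matrix, as `Matrix.PosSemidef.sqrt` was defined
in the older Mathlib: `U * diagonal (√λ) * Uᴴ` with `U` the eigenvector unitary. -/
noncomputable def posSemidefSqrt {n : ℕ} {A : Matrix (Fin n) (Fin n) ℝ} (hA : A.PosSemidef) :
    Matrix (Fin n) (Fin n) ℝ :=
  hA.1.eigenvectorUnitary.1 * diagonal ((↑) ∘ (√·) ∘ hA.1.eigenvalues) *
    (star hA.1.eigenvectorUnitary : Matrix (Fin n) (Fin n) ℝ)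

section aux
variable {n : ℕ}

lemma herm_t {M : Matrix (Fin n) (Fin n) ℝ} (h : M.IsHermitian) : Mᵀ = M := by
  rw [← Matrix.conjTranspose_eq_transpose_of_trivial]; exact h

lemma rank_inj {q : ℕ} (S : Matrix (Fin n) (Fin q) ℝ) (hS : S.rank = q) :
    Function.Injective S.mulVec := by
  have hker : LinearMap.ker S.mulVecLin = ⊥ := by
    have h1 := S.mulVecLin.finrank_range_add_finrank_ker
    rw [show Module.finrank ℝ (LinearMap.range S.mulVecLin) = q from hS] at h1
    have h2 : Module.finrank ℝ (Fin q → ℝ) = q := by simp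
    rw [h2] at h1
    have h3 : Module.finrank ℝ (LinearMap.ker S.mulVecLin) = 0 := by omega
    exact Submodule.finrank_eq_zero.mp h3
  intro x y hxy
  have : S.mulVecLin x = S.mulVecLin y := hxy
  exact LinearMap.ker_eq_bot.mp hker this

end aux

section aux2
variable {n : ℕ} (A W : Matrix (Fin n) (Fin n) ℝ)

lemma M_posdef {q : ℕ} (hA : IsUnit A.det) (hW : W.PosDef)
    (S : Matrix (Fin n) (Fin q) ℝ) (hS : S.rank = q) :
    (Sᵀ * A * W * Aᵀ * S).PosDef := by
  refine Matrix.posDef_iff_dotProduct_mulVec.mpr ⟨?_, ?_⟩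
  · show (Sᵀ * A * W * Aᵀ * S)ᴴ = _
    rw [Matrix.conjTranspose_eq_transpose_of_trivial]
    simp only [Matrix.transpose_mul, Matrix.transpose_transpose, herm_t hW.1]
    simp only [Matrix.mul_assoc]
  · intro x hx
    have hxS : S *ᵥ x ≠ 0 := fun h => hx (rank_inj S hS (h.trans (Matrix.mulVec_zero S).symm))
    have hAt : IsUnit Aᵀ.det := by rwa [Matrix.det_transpose]
    have hAtinj : Function.Injective (Aᵀ).mulVec :=
      Matrix.mulVec_injective_iff_isUnit.mpr ((Matrix.isUnit_iff_isUnit_det Aᵀ).mpr hAt)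
    have hu : Aᵀ *ᵥ (S *ᵥ x) ≠ 0 := fun h => hxS (hAtinj (h.trans (Matrix.mulVec_zero Aᵀ).symm))
    have key : dotProduct (star x) ((Sᵀ * A * W * Aᵀ * S) *ᵥ x)
        = dotProduct (star (Aᵀ *ᵥ (S *ᵥ x))) (W *ᵥ (Aᵀ *ᵥ (S *ᵥ x))) := by
      simp only [star_trivial, ← Matrix.mulVec_mulVec]
      rw [Matrix.dotProduct_mulVec x Sᵀ, Matrix.vecMul_transpose,
        Matrix.dotProduct_mulVec _ A, ← Matrix.mulVec_transpose]
    rw [key]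
    exact hW.dotProduct_mulVec_pos hu

lemma M_det_unit {q : ℕ} (hA : IsUnit A.det) (hW : W.PosDef)
    (S : Matrix (Fin n) (Fin q) ℝ) (hS : S.rank = q) :
    IsUnit (Sᵀ * A * W * Aᵀ * S).det :=
  (M_posdef A W hA hW S hS).det_pos.ne'.isUnit

end aux2

section aux3
variable {n q : ℕ} (A W : Matrix (Fin n) (Fin n) ℝ) (S : Matrix (Fin n) (Fin q) ℝ)

lemma Minv_symm (hA : IsUnit A.det) (hW : W.PosDef) (hS : S.rank = q) : ((Sᵀ * A * W * Aᵀ * S)⁻¹)ᵀ = (Sᵀ * A * W * Aᵀ * S)⁻¹ := by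
  rw [Matrix.transpose_nonsing_inv, herm_t (M_posdef A W hA hW S hS).1]

lemma Z_symm (hA : IsUnit A.det) (hW : W.PosDef) (hS : S.rank = q) : (Zmat A W S)ᵀ = Zmat A W S := by
  have h : (Sᵀ * (A * (W * (Aᵀ * S))))ᵀ = Sᵀ * (A * (W * (Aᵀ * S))) := by
    have := herm_t (M_posdef A W hA hW S hS).1
    simpa only [Matrix.mul_assoc] using this
  simp only [Zmat, Matrix.transpose_mul, Matrix.transpose_transpose,
    Matrix.mul_assoc, Matrix.transpose_nonsing_inv, h]

lemma ZWZ (hA : IsUnit A.det) (hW : W.PosDef) (hS : S.rank = q) : Zmat A W S * W * Zmat A W S = Zmat A W S := by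
  have hd := M_det_unit A W hA hW S hS
  have h : (Sᵀ * A * W * Aᵀ * S)⁻¹ * (Sᵀ * A * W * Aᵀ * S) * (Sᵀ * A * W * Aᵀ * S)⁻¹
      = (Sᵀ * A * W * Aᵀ * S)⁻¹ := by
    rw [Matrix.nonsing_inv_mul _ hd, Matrix.one_mul]
  calc Zmat A W S * W * Zmat A W S
      = Aᵀ * S * ((Sᵀ * A * W * Aᵀ * S)⁻¹ * (Sᵀ * A * W * Aᵀ * S) * (Sᵀ * A * W * Aᵀ * S)⁻¹)
        * Sᵀ * A := by simp only [Zmat, Matrix.mul_assoc]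
    _ = Zmat A W S := by rw [h]; simp only [Zmat, Matrix.mul_assoc]

end aux3

section aux4
variable {n : ℕ} (W : Matrix (Fin n) (Fin n) ℝ)

lemma R_mul_R (hW : W.PosDef) : posSemidefSqrt hW.posSemidef * posSemidefSqrt hW.posSemidef = W := by
  have hsp := hW.posSemidef.1.spectral_theorem
  rw [Unitary.conjStarAlgAut_apply] at hsp
  unfold posSemidefSqrt
  set U : Matrix (Fin n) (Fin n) ℝ := hW.posSemidef.1.eigenvectorUnitary.1 with hU
  have hUU : star U * U = 1 := Unitary.coe_star_mul_self _
  set D : Matrix (Fin n) (Fin n) ℝ := diagonal ((↑) ∘ (√·) ∘ hW.posSemidef.1.eigenvalues) with hD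
  calc U * D * star U * (U * D * star U) = U * (D * (star U * U) * D) * star U := by
          simp only [Matrix.mul_assoc]
    _ = U * diagonal (RCLike.ofReal ∘ hW.posSemidef.1.eigenvalues) * star U := by
          rw [hUU, Matrix.mul_one, hD, Matrix.diagonal_mul_diagonal]
          congr 2
          ext i j
          simp [Matrix.diagonal_apply, Real.mul_self_sqrt (hW.posSemidef.eigenvalues_nonneg i)]
    _ = W := hsp.symm

lemma R_symm (hW : W.PosDef) : (posSemidefSqrt hW.posSemidef)ᵀ = posSemidefSqrt hW.posSemidef :=
  by simp only [posSemidefSqrt, Unitary.coe_star, Matrix.star_eq_conjTranspose,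
    Matrix.conjTranspose_eq_transpose_of_trivial, Matrix.transpose_mul,
    Matrix.transpose_transpose, Matrix.diagonal_transpose, Matrix.mul_assoc]

lemma R_det (hW : W.PosDef) : IsUnit (posSemidefSqrt hW.posSemidef).det := by
  have h : (posSemidefSqrt hW.posSemidef).det * (posSemidefSqrt hW.posSemidef).det = W.det := by
    rw [← Matrix.det_mul, R_mul_R W hW]
  have := hW.det_pos
  have hne : (posSemidefSqrt hW.posSemidef).det ≠ 0 := by
    intro h0; rw [h0, mul_zero] at h; linarith
  exact hne.isUnit

lemma Winv_eq (R : Matrix (Fin n) (Fin n) ℝ) (hRR : R * R = W) : W⁻¹ = R⁻¹ * R⁻¹ := by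
  rw [← hRR, Matrix.mul_inv_rev]

lemma Rinv_W (R : Matrix (Fin n) (Fin n) ℝ) (hRR : R * R = W) (hRd : IsUnit R.det) :
    R⁻¹ * W = R := by
  rw [← hRR, ← Matrix.mul_assoc, Matrix.nonsing_inv_mul _ hRd, Matrix.one_mul]

end aux4

section aux5
variable {n q : ℕ} (A W : Matrix (Fin n) (Fin n) ℝ) (S : Matrix (Fin n) (Fin q) ℝ)

lemma step_error (hA : IsUnit A.det) (X : Matrix (Fin n) (Fin n) ℝ) :
    rowStep A W S X - A⁻¹ = (1 - W * Zmat A W S) * (X - A⁻¹) := by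
  have hAA : A * A⁻¹ = 1 := Matrix.mul_nonsing_inv A hA
  have h1 : (1 : Matrix (Fin n) (Fin n) ℝ) - A * X = A * (A⁻¹ - X) := by
    rw [Matrix.mul_sub, hAA]
  have h2 : W * Aᵀ * S * (Sᵀ * A * W * Aᵀ * S)⁻¹ * Sᵀ * (A * (A⁻¹ - X))
      = W * Zmat A W S * (A⁻¹ - X) := by simp only [Zmat, Matrix.mul_assoc]
  rw [rowStep, h1, h2]
  noncomm_ring

end aux5

section aux6
variable {n : ℕ}

lemma inf_trace_le {H : Matrix (Fin n) (Fin n) ℝ} (hH : H.IsHermitian)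
    (F : Matrix (Fin n) (Fin n) ℝ) :
    (⨅ j, hH.eigenvalues j) * (Fᵀ * F).trace ≤ (Fᵀ * H * F).trace := by
  rcases Nat.eq_zero_or_pos n with h0 | hn
  · subst h0
    simp [Matrix.trace]
  haveI : Nonempty (Fin n) := Fin.pos_iff_nonempty.mp hn
  set U : Matrix (Fin n) (Fin n) ℝ := (hH.eigenvectorUnitary : Matrix (Fin n) (Fin n) ℝ) with hU
  have hsp : H = U * Matrix.diagonal hH.eigenvalues * Uᵀ := by
    have := hH.spectral_theorem
    rwa [Unitary.conjStarAlgAut_apply, Matrix.star_eq_conjTranspose, Matrix.conjTranspose_eq_transpose_of_trivial,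
      RCLike.ofReal_real_eq_id, Function.id_comp] at this
  have hUUt : U * Uᵀ = 1 := by
    have := (Matrix.mem_unitaryGroup_iff).mp hH.eigenvectorUnitary.2
    rwa [Matrix.star_eq_conjTranspose, Matrix.conjTranspose_eq_transpose_of_trivial] at this
  set G : Matrix (Fin n) (Fin n) ℝ := Uᵀ * F with hG
  have h1 : Fᵀ * F = Gᵀ * G := by
    rw [hG, Matrix.transpose_mul, Matrix.transpose_transpose, Matrix.mul_assoc,
      ← Matrix.mul_assoc U, hUUt, Matrix.one_mul]
  have h2 : Fᵀ * H * F = Gᵀ * Matrix.diagonal hH.eigenvalues * G := by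
    conv_lhs => rw [hsp]
    rw [hG, Matrix.transpose_mul, Matrix.transpose_transpose]
    simp only [Matrix.mul_assoc]
  rw [h1, h2]
  have htr1 : (Gᵀ * G).trace = ∑ j, ∑ a, G a j * G a j := by
    simp [Matrix.trace, Matrix.diag, Matrix.mul_apply]
  have htr2 : (Gᵀ * Matrix.diagonal hH.eigenvalues * G).trace
      = ∑ j, ∑ a, hH.eigenvalues a * (G a j * G a j) := by
    rw [Matrix.mul_assoc]
    simp only [Matrix.trace, Matrix.diag, Matrix.mul_apply, Matrix.diagonal_apply,
      ite_mul, zero_mul, Finset.sum_ite_eq, Finset.mem_univ, if_true]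
    refine Finset.sum_congr rfl fun j _ => Finset.sum_congr rfl fun a _ => ?_
    rw [Matrix.transpose_apply]; ring
  rw [htr1, htr2, Finset.mul_sum]
  refine Finset.sum_le_sum fun j _ => ?_
  rw [Finset.mul_sum]
  refine Finset.sum_le_sum fun a _ => ?_
  exact mul_le_mul_of_nonneg_right (ciInf_le (Finite.bddBelow_range _) a)
    (mul_self_nonneg _)

end aux6

section aux7
variable {n : ℕ} (W : Matrix (Fin n) (Fin n) ℝ)

lemma Rinv_symm (hW : W.PosDef) : ((posSemidefSqrt hW.posSemidef)⁻¹)ᵀ = (posSemidefSqrt hW.posSemidef)⁻¹ := by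
  rw [Matrix.transpose_nonsing_inv, R_symm W hW]

lemma R_Rinv (hW : W.PosDef) : posSemidefSqrt hW.posSemidef * (posSemidefSqrt hW.posSemidef)⁻¹ = 1 :=
  Matrix.mul_nonsing_inv _ (R_det W hW)

lemma Rinv_R (hW : W.PosDef) : (posSemidefSqrt hW.posSemidef)⁻¹ * posSemidefSqrt hW.posSemidef = 1 :=
  Matrix.nonsing_inv_mul _ (R_det W hW)

lemma wF_eq (hW : W.PosDef) (E : Matrix (Fin n) (Fin n) ℝ) :
    wFNormSq W E = (((posSemidefSqrt hW.posSemidef)⁻¹ * E * (posSemidefSqrt hW.posSemidef)⁻¹)ᵀ *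
      ((posSemidefSqrt hW.posSemidef)⁻¹ * E * (posSemidefSqrt hW.posSemidef)⁻¹)).trace := by
  set R := posSemidefSqrt hW.posSemidef with hR
  rw [wFNormSq, Winv_eq W R (R_mul_R W hW), Matrix.transpose_mul, Matrix.transpose_mul,
    Rinv_symm W hW]
  have h1 : Eᵀ * (R⁻¹ * R⁻¹) * E * (R⁻¹ * R⁻¹) = (Eᵀ * R⁻¹ * R⁻¹ * E * R⁻¹) * R⁻¹ := by
    simp only [Matrix.mul_assoc]
  rw [h1, Matrix.trace_mul_comm]
  simp only [Matrix.mul_assoc]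
  rfl

end aux7

section aux8
variable {n q : ℕ} (A W : Matrix (Fin n) (Fin n) ℝ) (S : Matrix (Fin n) (Fin q) ℝ)

lemma trace_WZ (hA : IsUnit A.det) (hW : W.PosDef) (hS : S.rank = q) :
    (W * Zmat A W S).trace = (q : ℝ) := by
  have h : W * Zmat A W S = (W * Aᵀ * S * (Sᵀ * A * W * Aᵀ * S)⁻¹) * (Sᵀ * A) := by
    simp only [Zmat, Matrix.mul_assoc]
  rw [h, Matrix.trace_mul_comm]
  have h2 : Sᵀ * A * (W * Aᵀ * S * (Sᵀ * A * W * Aᵀ * S)⁻¹)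
      = (Sᵀ * A * W * Aᵀ * S) * (Sᵀ * A * W * Aᵀ * S)⁻¹ := by
    simp only [Matrix.mul_assoc]
  rw [h2, Matrix.mul_nonsing_inv _ (M_det_unit A W hA hW S hS), Matrix.trace_one]
  simp

lemma q_le_n (hS : S.rank = q) : q ≤ n := by
  have := S.rank_le_card_height
  simpa [hS] using this

end aux8

section main
variable {n r : ℕ}

set_option maxHeartbeats 1000000 in
lemma step_sum (A W : Matrix (Fin n) (Fin n) ℝ)
    (q : Fin r → ℕ) (S : ∀ i, Matrix (Fin n) (Fin (q i)) ℝ)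
    (hA : IsUnit A.det) (hW : W.PosDef) (hS : ∀ i, (S i).rank = q i)
    (p : Fin r → ℝ) (hsum : ∑ i, p i = 1)
    (hM : (posSemidefSqrt hW.posSemidef * (∑ i, p i • Zmat A W (S i)) *
      posSemidefSqrt hW.posSemidef).IsHermitian)
    (X : Matrix (Fin n) (Fin n) ℝ) :
    ∑ i, p i * wFNormSq W (rowStep A W (S i) X - A⁻¹) ≤
      (1 - ⨅ j, hM.eigenvalues j) * wFNormSq W (X - A⁻¹) := by
  set R := posSemidefSqrt hW.posSemidef with hRdef
  set E := X - A⁻¹ with hE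
  set F := R⁻¹ * E * R⁻¹ with hF
  have key : ∀ i, wFNormSq W (rowStep A W (S i) X - A⁻¹)
      = (Fᵀ * F).trace - (Fᵀ * (R * Zmat A W (S i) * R) * F).trace := by
    intro i
    set Z := Zmat A W (S i) with hZ
    set P := R * Z * R with hP
    have hPt : Pᵀ = P := by
      rw [hP, Matrix.transpose_mul, Matrix.transpose_mul, R_symm W hW,
        Z_symm A W (S i) hA hW (hS i)]
      simp only [Matrix.mul_assoc]
      rfl
    have hPP : P * P = P := by
      have h1 : P * P = R * (Z * ((R * R) * (Z * R))) := by
        rw [hP]; simp only [Matrix.mul_assoc]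
      rw [h1, R_mul_R W hW]
      have h2 : R * (Z * (W * (Z * R))) = R * ((Z * W * Z) * R) := by
        simp only [Matrix.mul_assoc]
      rw [h2, ZWZ A W (S i) hA hW (hS i), hP]
      simp only [Matrix.mul_assoc]
      rfl
    have hPF : P * F = R * (Z * E) * R⁻¹ := by
      have h1 : P * F = R * (Z * ((R * R⁻¹) * (E * R⁻¹))) := by
        rw [hP, hF]; simp only [Matrix.mul_assoc]
      rw [h1, R_Rinv W hW, Matrix.one_mul]
      simp only [Matrix.mul_assoc]
    have h6 : R⁻¹ * ((1 - W * Z) * E) * R⁻¹ = (1 - P) * F := by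
      have hWZ : (1 - W * Z) * E = E - W * (Z * E) := by
        rw [Matrix.sub_mul, Matrix.one_mul, Matrix.mul_assoc]
      rw [hWZ, Matrix.mul_sub, Matrix.sub_mul, Matrix.sub_mul, Matrix.one_mul, hPF]
      congr 1
      have h2 : R⁻¹ * (W * (Z * E)) * R⁻¹ = (R⁻¹ * W) * (Z * E) * R⁻¹ := by
        simp only [Matrix.mul_assoc]
      rw [h2, Rinv_W W R (R_mul_R W hW) (R_det W hW)]
    have h1Pt : (1 - P)ᵀ = 1 - P := by
      rw [Matrix.transpose_sub, Matrix.transpose_one, hPt]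
    have hproj : (1 - P) * (1 - P) = 1 - P := by
      rw [Matrix.sub_mul, Matrix.one_mul, Matrix.mul_sub, Matrix.mul_one, hPP]
      abel
    rw [step_error A W (S i) hA X, wF_eq W hW, h6, Matrix.transpose_mul, h1Pt]
    have h7 : Fᵀ * (1 - P) * ((1 - P) * F) = Fᵀ * (((1 - P) * (1 - P)) * F) := by
      simp only [Matrix.mul_assoc]
    rw [h7, hproj, Matrix.sub_mul, Matrix.one_mul, Matrix.mul_sub, Matrix.trace_sub]
    congr 1
    simp only [Matrix.mul_assoc]
  -- now the sum
  have hsum2 : Fᵀ * (R * (∑ i, p i • Zmat A W (S i)) * R) * F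
      = ∑ i, p i • (Fᵀ * (R * Zmat A W (S i) * R) * F) := by
    simp only [Matrix.mul_sum, Matrix.sum_mul, Matrix.mul_smul, Matrix.smul_mul]
  have hlow := inf_trace_le hM F
  have htr : (Fᵀ * (R * (∑ i, p i • Zmat A W (S i)) * R) * F).trace
      = ∑ i, p i * (Fᵀ * (R * Zmat A W (S i) * R) * F).trace := by
    rw [hsum2, Matrix.trace_sum]
    simp only [Matrix.trace_smul, smul_eq_mul]
  calc ∑ i, p i * wFNormSq W (rowStep A W (S i) X - A⁻¹)
      = ∑ i, p i * ((Fᵀ * F).trace - (Fᵀ * (R * Zmat A W (S i) * R) * F).trace) := by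
        exact Finset.sum_congr rfl fun i _ => by rw [key i]
    _ = (Fᵀ * F).trace - (Fᵀ * (R * (∑ i, p i • Zmat A W (S i)) * R) * F).trace := by
        rw [htr]
        simp only [mul_sub]
        rw [Finset.sum_sub_distrib, ← Finset.sum_mul, hsum, one_mul]
    _ ≤ (Fᵀ * F).trace - (⨅ j, hM.eigenvalues j) * (Fᵀ * F).trace := by linarith
    _ = (1 - ⨅ j, hM.eigenvalues j) * (Fᵀ * F).trace := by ring
    _ = (1 - ⨅ j, hM.eigenvalues j) * wFNormSq W (X - A⁻¹) := by rw [wF_eq W hW]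

end main

section main2
variable {n r : ℕ}

set_option maxHeartbeats 1000000 in
lemma rho_nonneg (hn : 0 < n) (A W : Matrix (Fin n) (Fin n) ℝ)
    (q : Fin r → ℕ) (S : ∀ i, Matrix (Fin n) (Fin (q i)) ℝ)
    (hA : IsUnit A.det) (hW : W.PosDef) (hS : ∀ i, (S i).rank = q i)
    (p : Fin r → ℝ) (hp : ∀ i, 0 < p i) (hsum : ∑ i, p i = 1)
    (hM : (posSemidefSqrt hW.posSemidef * (∑ i, p i • Zmat A W (S i)) *
      posSemidefSqrt hW.posSemidef).IsHermitian) :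
    0 ≤ 1 - ⨅ j, hM.eigenvalues j := by
  set R := posSemidefSqrt hW.posSemidef with hRdef
  have h := inf_trace_le hM 1
  rw [Matrix.transpose_one, Matrix.mul_one, Matrix.one_mul, Matrix.mul_one,
    Matrix.trace_one] at h
  have htr : (R * (∑ i, p i • Zmat A W (S i)) * R).trace = ∑ i, p i * (q i : ℝ) := by
    rw [Matrix.trace_mul_comm]
    have h1 : R * (R * (∑ i, p i • Zmat A W (S i)))
        = W * (∑ i, p i • Zmat A W (S i)) := by
      rw [← Matrix.mul_assoc, R_mul_R W hW]
    rw [h1, Matrix.mul_sum]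
    simp only [Matrix.mul_smul]
    rw [Matrix.trace_sum]
    simp only [Matrix.trace_smul, smul_eq_mul]
    exact Finset.sum_congr rfl fun i _ => by rw [trace_WZ A W (S i) hA hW (hS i)]
  have hqn : ∑ i, p i * (q i : ℝ) ≤ (n : ℝ) := by
    calc ∑ i, p i * (q i : ℝ) ≤ ∑ i, p i * (n : ℝ) :=
          Finset.sum_le_sum fun i _ =>
            mul_le_mul_of_nonneg_left (Nat.cast_le.mpr (q_le_n (S i) (hS i))) (hp i).le
      _ = (n : ℝ) := by rw [← Finset.sum_mul, hsum, one_mul]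
  have hn' : (0 : ℝ) < (Fintype.card (Fin n) : ℝ) := by
    simp only [Fintype.card_fin]; exact_mod_cast hn
  have hcard : (Fintype.card (Fin n) : ℝ) = (n : ℝ) := by simp
  rw [htr] at h
  nlinarith [h, hqn, hn', hcard]

end main2


set_option maxHeartbeats 1000000 in
theorem stmt12 {n r : ℕ} (hn : 0 < n) (A W : Matrix (Fin n) (Fin n) ℝ)
    (q : Fin r → ℕ) (S : ∀ i, Matrix (Fin n) (Fin (q i)) ℝ)
    (hA : IsUnit A.det) (hW : W.PosDef) (hS : ∀ i, (S i).rank = q i)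
    (p : Fin r → ℝ) (hp : ∀ i, 0 < p i) (hsum : ∑ i, p i = 1)
    (X0 : Matrix (Fin n) (Fin n) ℝ) (k : ℕ)
    (hM : (posSemidefSqrt hW.posSemidef * (∑ i, p i • Zmat A W (S i)) *
      posSemidefSqrt hW.posSemidef).IsHermitian) :
    ∑ s : Fin k → Fin r, (∏ j, p (s j)) *
        wFNormSq W ((List.ofFn s).foldl (fun X i => rowStep A W (S i) X) X0 - A⁻¹) ≤
      (1 - ⨅ j, hM.eigenvalues j) ^ k * wFNormSq W (X0 - A⁻¹) := by
  induction k generalizing X0 with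
  | zero => simp
  | succ k ih =>
    have hρ := rho_nonneg hn A W q S hA hW hS p hp hsum hM
    calc ∑ s : Fin (k+1) → Fin r, (∏ j, p (s j)) *
            wFNormSq W ((List.ofFn s).foldl (fun X i => rowStep A W (S i) X) X0 - A⁻¹)
        = ∑ i : Fin r, ∑ t : Fin k → Fin r, (p i * ∏ j, p (t j)) *
            wFNormSq W ((List.ofFn t).foldl (fun X i => rowStep A W (S i) X)
              (rowStep A W (S i) X0) - A⁻¹) := by
          rw [← Equiv.sum_comp (Fin.consEquiv fun _ => Fin r), Fintype.sum_prod_type]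
          refine Finset.sum_congr rfl fun i _ => Finset.sum_congr rfl fun t _ => ?_
          congr 1
          · simp [Fin.consEquiv_apply, Fin.prod_univ_succ]
          · simp [Fin.consEquiv_apply, List.ofFn_succ, Fin.cons_zero, Fin.cons_succ]
      _ = ∑ i : Fin r, p i * ∑ t : Fin k → Fin r, (∏ j, p (t j)) *
            wFNormSq W ((List.ofFn t).foldl (fun X i => rowStep A W (S i) X)
              (rowStep A W (S i) X0) - A⁻¹) := by
          refine Finset.sum_congr rfl fun i _ => ?_
          rw [Finset.mul_sum]
          exact Finset.sum_congr rfl fun t _ => by ring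
      _ ≤ ∑ i : Fin r, p i * ((1 - ⨅ j, hM.eigenvalues j) ^ k *
            wFNormSq W (rowStep A W (S i) X0 - A⁻¹)) :=
          Finset.sum_le_sum fun i _ =>
            mul_le_mul_of_nonneg_left (ih (rowStep A W (S i) X0)) (hp i).le
      _ = (1 - ⨅ j, hM.eigenvalues j) ^ k *
            ∑ i : Fin r, p i * wFNormSq W (rowStep A W (S i) X0 - A⁻¹) := by
          simp only [Finset.mul_sum]
          exact Finset.sum_congr rfl fun i _ => by ring
      _ ≤ (1 - ⨅ j, hM.eigenvalues j) ^ k *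
            ((1 - ⨅ j, hM.eigenvalues j) * wFNormSq W (X0 - A⁻¹)) :=
          mul_le_mul_of_nonneg_left
            (step_sum A W q S hA hW hS p hsum hM X0) (pow_nonneg hρ k)
      _ = (1 - ⨅ j, hM.eigenvalues j) ^ (k+1) * wFNormSq W (X0 - A⁻¹) := by ring
end
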